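/- Let E be a Polish space. The pointwise closure of the set of continuous functions f : E → [0,1] equals the set of all Borel measurable functions f : E → [0,1]. If E is locally compact, the same holds with continuous functions replaced by continuous compactly supported functions with values in [0,1]. -/

import Mathlib

open Filter

/-- The smallest set of functions containing `F` and closed under pointwise limits of
sequences. -/
def pointwiseClosure {E : Type*} (F : Set (E → ℝ)) : Set (E → ℝ) :=
  ⋂₀ {G : Set (E → ℝ) | F ⊆ G ∧
    ∀ f : ℕ → E → ℝ, (∀ n, f n ∈ G) →
      ∀ g : E → ℝ, (∀ x, Tendsto (fun n => f n x) atTop (nhds (g x))) → g ∈ G}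

section Aux

variable {E : Type*}

/-- A set of functions is limit-closed if it is stable under pointwise limits of sequences. -/
def LimClosed (G : Set (E → ℝ)) : Prop :=
  ∀ f : ℕ → E → ℝ, (∀ n, f n ∈ G) →
    ∀ g : E → ℝ, (∀ x, Tendsto (fun n => f n x) atTop (nhds (g x))) → g ∈ G

theorem subset_pc (F : Set (E → ℝ)) : F ⊆ pointwiseClosure F :=
  fun f hf => Set.mem_sInter.2 fun _ hG => hG.1 hf

theorem pc_limClosed (F : Set (E → ℝ)) : LimClosed (pointwiseClosure F) := by
  intro f hf g hg
  exact Set.mem_sInter.2 fun G hG =>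
    hG.2 f (fun n => Set.mem_sInter.1 (hf n) G hG) g hg

theorem pc_min {F G : Set (E → ℝ)} (hFG : F ⊆ G) (hG : LimClosed G) :
    pointwiseClosure F ⊆ G :=
  fun f hf => Set.mem_sInter.1 hf G ⟨hFG, hG⟩

/-- The pointwise closure is stable under continuous binary operations that preserve `F`. -/
theorem pc_binop {F : Set (E → ℝ)} (op : ℝ → ℝ → ℝ)
    (hop : Continuous fun p : ℝ × ℝ => op p.1 p.2)
    (hF : ∀ f ∈ F, ∀ g ∈ F, (fun x => op (f x) (g x)) ∈ F) :
    ∀ f ∈ pointwiseClosure F, ∀ g ∈ pointwiseClosure F,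
      (fun x => op (f x) (g x)) ∈ pointwiseClosure F := by
  have lim1 : ∀ (u : ℕ → E → ℝ) (v : E → ℝ),
      (∀ x, Tendsto (fun n => u n x) atTop (nhds (v x))) →
      ∀ (w : E → ℝ) (x : E),
        Tendsto (fun n => op (u n x) (w x)) atTop (nhds (op (v x) (w x))) := by
    intro u v hv w x
    exact (hop.tendsto (v x, w x)).comp ((hv x).prodMk_nhds tendsto_const_nhds)
  have lim2 : ∀ (u : ℕ → E → ℝ) (v : E → ℝ),
      (∀ x, Tendsto (fun n => u n x) atTop (nhds (v x))) →
      ∀ (w : E → ℝ) (x : E),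
        Tendsto (fun n => op (w x) (u n x)) atTop (nhds (op (w x) (v x))) := by
    intro u v hv w x
    exact (hop.tendsto (w x, v x)).comp (tendsto_const_nhds.prodMk_nhds (hv x))
  have key : ∀ g ∈ F, ∀ f ∈ pointwiseClosure F,
      (fun x => op (f x) (g x)) ∈ pointwiseClosure F := by
    intro g hg f hf
    have : pointwiseClosure F ⊆ {f | (fun x => op (f x) (g x)) ∈ pointwiseClosure F} := by
      apply pc_min
      · exact fun f hf => subset_pc F (hF f hf g hg)
      · intro u hu v hv
        exact pc_limClosed F (fun n x => op (u n x) (g x)) hu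
          (fun x => op (v x) (g x)) (lim1 u v hv g)
    exact this hf
  intro f hf g hg
  have : pointwiseClosure F ⊆ {g | (fun x => op (f x) (g x)) ∈ pointwiseClosure F} := by
    apply pc_min
    · exact fun g hg => key g hg f hf
    · intro u hu v hv
      exact pc_limClosed F (fun n x => op (f x) (u n x)) hu
        (fun x => op (f x) (v x)) (lim2 u v hv f)
  exact this hg

end Aux

section Main

variable {E : Type*} [TopologicalSpace E] [PolishSpace E]
    [MeasurableSpace E] [BorelSpace E]

theorem limClosed_measIcc :
    LimClosed {f : E → ℝ | Measurable f ∧ ∀ x, f x ∈ Set.Icc (0 : ℝ) 1} := by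
  intro f hf g hg
  constructor
  · exact measurable_of_tendsto_metrizable (fun n => (hf n).1) (tendsto_pi_nhds.2 hg)
  · intro x
    exact isClosed_Icc.mem_of_tendsto (hg x) (Eventually.of_forall fun n => (hf n).2 x)

/-- Main direction for the continuous case. -/
theorem pc_cont_eq :
    pointwiseClosure {f : E → ℝ | Continuous f ∧ ∀ x, f x ∈ Set.Icc (0 : ℝ) 1}
        = {f : E → ℝ | Measurable f ∧ ∀ x, f x ∈ Set.Icc (0 : ℝ) 1} := by
  classical
  letI := TopologicalSpace.upgradeIsCompletelyMetrizable E
  set F : Set (E → ℝ) := {f : E → ℝ | Continuous f ∧ ∀ x, f x ∈ Set.Icc (0 : ℝ) 1} with hFdef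
  set G := pointwiseClosure F with hGdef
  apply Set.Subset.antisymm
  · apply pc_min _ limClosed_measIcc
    exact fun f hf => ⟨hf.1.measurable, hf.2⟩
  -- the hard direction
  -- indicators of open sets
  have hopen : ∀ U : Set E, IsOpen U → U.indicator (fun _ => (1 : ℝ)) ∈ G := by
    intro U hU
    by_cases hUuniv : U = Set.univ
    · subst hUuniv
      rw [Set.indicator_univ]
      exact subset_pc F ⟨continuous_const, fun x => ⟨zero_le_one, le_refl _⟩⟩
    have hUc : Uᶜ.Nonempty := by
      rw [Set.nonempty_compl]; exact hUuniv
    set q : ℕ → E → ℝ := fun n x => min 1 (n * Metric.infDist x Uᶜ) with hqdef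
    have hq : ∀ n, q n ∈ F := by
      intro n
      refine ⟨continuous_const.min (continuous_const.mul (Metric.continuous_infDist_pt Uᶜ)), ?_⟩
      intro x
      constructor
      · exact le_min zero_le_one (mul_nonneg (Nat.cast_nonneg n) Metric.infDist_nonneg)
      · exact min_le_left _ _
    apply pc_limClosed F q (fun n => subset_pc F (hq n))
    intro x
    by_cases hx : x ∈ U
    · have hd : 0 < Metric.infDist x Uᶜ :=
        (hU.isClosed_compl.notMem_iff_infDist_pos hUc).1 (by simp [hx])
      obtain ⟨N, hN⟩ := exists_nat_ge (Metric.infDist x Uᶜ)⁻¹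
      rw [Set.indicator_of_mem hx]
      apply tendsto_atTop_of_eventually_const (i₀ := N)
      intro n hn
      have h1 : (1 : ℝ) ≤ n * Metric.infDist x Uᶜ := by
        rw [← inv_mul_cancel₀ hd.ne']
        apply mul_le_mul_of_nonneg_right _ hd.le
        exact hN.trans (Nat.cast_le.2 hn)
      simp [hqdef, min_eq_left h1]
    · have hd : Metric.infDist x Uᶜ = 0 := Metric.infDist_zero_of_mem hx
      rw [Set.indicator_of_notMem hx]
      have : ∀ n : ℕ, q n x = 0 := by
        intro n; simp [hqdef, hd]
      simp only [this]
      exact tendsto_const_nhds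
  -- indicator of a union is the max of indicators
  have hmax : ∀ f ∈ G, ∀ g ∈ G, (fun x => max (f x) (g x)) ∈ G := by
    apply pc_binop _ (continuous_fst.max continuous_snd)
    rintro u ⟨huc, hu01⟩ v ⟨hvc, hv01⟩
    refine ⟨huc.max hvc, fun x => ?_⟩
    have h1 := hu01 x; have h2 := hv01 x
    simp only [Set.mem_Icc] at h1 h2 ⊢
    exact ⟨le_max_of_le_left h1.1, max_le h1.2 h2.2⟩
  have hindmax : ∀ (A B : Set E) (x : E),
      (A ∪ B).indicator (fun _ => (1 : ℝ)) x
        = max (A.indicator (fun _ => (1 : ℝ)) x) (B.indicator (fun _ => (1 : ℝ)) x) := by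
    intro A B x
    by_cases hA : x ∈ A <;> by_cases hB : x ∈ B <;>
      simp [Set.indicator_apply, hA, hB]
  -- one minus a function
  have hsub : ∀ f ∈ G, (fun x => 1 - f x) ∈ G := by
    intro f hf
    apply pc_binop (fun a _ => 1 - a) (continuous_const.sub continuous_fst) _ f hf f hf
    rintro u ⟨huc, hu01⟩ v _
    refine ⟨continuous_const.sub huc, fun x => ?_⟩
    have h := hu01 x
    simp only [Set.mem_Icc] at h ⊢
    exact ⟨by linarith, by linarith⟩
  -- indicators of all measurable sets, via the Dynkin/π-system induction
  have hind : ∀ A : Set E, MeasurableSet A → A.indicator (fun _ => (1 : ℝ)) ∈ G := by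
    have h_eq : ‹MeasurableSpace E› = MeasurableSpace.generateFrom {s : Set E | IsOpen s} :=
      BorelSpace.measurable_eq
    refine MeasurableSpace.induction_on_inter
      (C := fun A _ => A.indicator (fun _ => (1 : ℝ)) ∈ G) h_eq
      (fun s hs t ht _ => hs.inter ht) ?_ (fun t ht => hopen t ht) ?_ ?_
    · show (∅ : Set E).indicator (fun _ => (1 : ℝ)) ∈ G
      rw [Set.indicator_empty]
      refine subset_pc F ⟨continuous_const, fun x => ?_⟩
      simp only [Pi.zero_apply, Set.mem_Icc]
      exact ⟨le_refl _, zero_le_one⟩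
    · intro t _ hCt
      show tᶜ.indicator (fun _ => (1 : ℝ)) ∈ G
      replace hCt : t.indicator (fun _ => (1 : ℝ)) ∈ G := hCt
      have h1 : (fun x => 1 - t.indicator (fun _ => (1 : ℝ)) x) ∈ G := hsub _ hCt
      have h2 : (fun x => 1 - t.indicator (fun _ => (1 : ℝ)) x)
          = tᶜ.indicator (fun _ => (1 : ℝ)) := by
        funext x
        by_cases hx : x ∈ t <;> simp [Set.indicator_apply, hx]
      rwa [h2] at h1
    · intro A _ _ hCA
      show (⋃ i, A i).indicator (fun _ => (1 : ℝ)) ∈ G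
      replace hCA : ∀ i, (A i).indicator (fun _ => (1 : ℝ)) ∈ G := hCA
      set V : ℕ → Set E := fun n => ⋃ i ∈ Finset.range (n + 1), A i with hVdef
      have hV : ∀ n, (V n).indicator (fun _ => (1 : ℝ)) ∈ G := by
        intro n
        induction n with
        | zero => simpa [hVdef] using hCA 0
        | succ n ih =>
          have hstep : V (n + 1) = V n ∪ A (n + 1) := by
            simp only [hVdef, Finset.range_add_one, Finset.set_biUnion_insert]
            rw [Set.union_comm]
          have hm := hmax _ ih _ (hCA (n + 1))
          have heq : (fun x => max ((V n).indicator (fun _ => (1 : ℝ)) x)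
              ((A (n + 1)).indicator (fun _ => (1 : ℝ)) x))
              = (V (n + 1)).indicator (fun _ => (1 : ℝ)) := by
            funext x
            rw [hstep, hindmax]
          rwa [heq] at hm
      apply pc_limClosed F (fun n => (V n).indicator (fun _ => (1 : ℝ))) hV
      intro x
      by_cases hx : x ∈ ⋃ i, A i
      · obtain ⟨i, hi⟩ := Set.mem_iUnion.1 hx
        rw [Set.indicator_of_mem hx]
        apply tendsto_atTop_of_eventually_const (i₀ := i)
        intro n hn
        have hxV : x ∈ V n :=
          Set.mem_biUnion (Finset.mem_range.2 (Nat.lt_succ_of_le hn)) hi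
        rw [Set.indicator_of_mem hxV]
      · have hxV : ∀ n, x ∉ V n := by
          intro n hxn
          obtain ⟨i, _, hi⟩ := Set.mem_iUnion₂.1 hxn
          exact hx (Set.mem_iUnion.2 ⟨i, hi⟩)
        rw [Set.indicator_of_notMem hx]
        simp only [Set.indicator_of_notMem (hxV _)]
        exact tendsto_const_nhds
  -- convexity of the closure
  have hconv : Convex ℝ G := by
    intro g hg h hh a b ha hb hab
    have hm := pc_binop (fun p q => a * p + b * q)
      (((continuous_const.mul continuous_fst)).add ((continuous_const.mul continuous_snd)))
      ?_ g hg h hh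
    · have : (fun x => a * g x + b * h x) = a • g + b • h := by
        funext x
        simp [Pi.add_apply, Pi.smul_apply, smul_eq_mul]
      rwa [this] at hm
    · rintro u ⟨huc, hu01⟩ v ⟨hvc, hv01⟩
      refine ⟨(continuous_const.mul huc).add (continuous_const.mul hvc), fun x => ?_⟩
      have h1 := hu01 x; have h2 := hv01 x
      simp only [Set.mem_Icc] at h1 h2 ⊢
      constructor
      · exact add_nonneg (mul_nonneg ha h1.1) (mul_nonneg hb h2.1)
      · calc a * u x + b * v x ≤ a * 1 + b * 1 := by
              gcongr
              exacts [h1.2, h2.2]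
          _ = 1 := by rw [mul_one, mul_one, hab]
  -- every measurable [0,1]-valued function is in G
  rintro f ⟨hfm, hf01⟩
  set s : ℕ → E → ℝ := fun n =>
    ∑ j ∈ Finset.Icc 1 (n + 1),
      (((n : ℝ) + 1)⁻¹ : ℝ) • (f ⁻¹' Set.Ici ((j : ℝ) / ((n : ℝ) + 1))).indicator
        (fun _ => (1 : ℝ)) with hsdef
  have hnpos : ∀ n : ℕ, (0 : ℝ) < (n : ℝ) + 1 := fun n => by positivity
  have hsG : ∀ n, s n ∈ G := by
    intro n
    apply hconv.sum_mem
    · intro j _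
      exact inv_nonneg.2 (hnpos n).le
    · rw [Finset.sum_const, Nat.card_Icc]
      simp only [Nat.add_sub_cancel, nsmul_eq_mul]
      push_cast
      rw [mul_inv_cancel₀ (hnpos n).ne']
    · intro j _
      exact hind _ (hfm measurableSet_Ici)
  -- counting lemma
  have hcount : ∀ (m K : ℕ), K ≤ m →
      (∑ j ∈ Finset.Icc 1 m, (if j ≤ K then (1 : ℝ) else 0)) = K := by
    intro m K hK
    have hfil : (Finset.Icc 1 m).filter (fun j => j ≤ K) = Finset.Icc 1 K := by
      ext j
      simp only [Finset.mem_filter, Finset.mem_Icc]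
      omega
    rw [Finset.sum_ite, hfil, Finset.sum_const, Finset.sum_const, smul_zero, add_zero,
      nsmul_eq_mul, mul_one, Nat.card_Icc, Nat.add_sub_cancel]
  -- value of s n at x
  have hsval : ∀ (n : ℕ) (x : E),
      s n x = ((n : ℝ) + 1)⁻¹ * (Nat.floor (((n : ℝ) + 1) * f x) : ℝ) := by
    intro n x
    have h0 : (0 : ℝ) ≤ f x := (hf01 x).1
    have h1 : f x ≤ 1 := (hf01 x).2
    set K := Nat.floor (((n : ℝ) + 1) * f x) with hKdef
    have hKle : K ≤ n + 1 := by
      have : ((n : ℝ) + 1) * f x ≤ ((n + 1 : ℕ) : ℝ) := by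
        push_cast
        nlinarith
      calc K ≤ Nat.floor ((n + 1 : ℕ) : ℝ) := Nat.floor_le_floor this
        _ = n + 1 := Nat.floor_natCast _
    have hcond : ∀ j : ℕ, ((j : ℝ) / ((n : ℝ) + 1) ≤ f x) ↔ j ≤ K := by
      intro j
      rw [div_le_iff₀ (hnpos n), mul_comm, hKdef, Nat.le_floor_iff (by positivity)]
    rw [hsdef]
    simp only [Finset.sum_apply, Pi.smul_apply, smul_eq_mul, Set.indicator_apply,
      Set.mem_preimage, Set.mem_Ici]
    rw [← Finset.mul_sum]
    congr 1
    calc (∑ j ∈ Finset.Icc 1 (n + 1), if (j : ℝ) / ((n : ℝ) + 1) ≤ f x then (1 : ℝ) else 0)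
        = ∑ j ∈ Finset.Icc 1 (n + 1), if j ≤ K then (1 : ℝ) else 0 := by
          apply Finset.sum_congr rfl
          intro j _
          simp only [hcond j]
      _ = K := hcount (n + 1) K hKle
  -- convergence of s n to f
  have hstend : ∀ x, Tendsto (fun n => s n x) atTop (nhds (f x)) := by
    intro x
    have h0 : (0 : ℝ) ≤ f x := (hf01 x).1
    have hlow : ∀ n : ℕ, f x - ((n : ℝ) + 1)⁻¹ ≤ s n x := by
      intro n
      rw [hsval n x]
      have := Nat.lt_floor_add_one (((n : ℝ) + 1) * f x)
      have hp := hnpos n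
      rw [sub_le_iff_le_add]
      rw [← mul_le_mul_iff_right₀ hp]
      have hK : ((n : ℝ) + 1) * f x - 1 ≤ (Nat.floor (((n : ℝ) + 1) * f x) : ℝ) := by
        linarith
      calc ((n : ℝ) + 1) * f x
          ≤ (Nat.floor (((n : ℝ) + 1) * f x) : ℝ) + 1 := by linarith
        _ = ((n : ℝ) + 1) * (((n : ℝ) + 1)⁻¹ * (Nat.floor (((n : ℝ) + 1) * f x) : ℝ)
              + ((n : ℝ) + 1)⁻¹) := by
            field_simp
    have hup : ∀ n : ℕ, s n x ≤ f x := by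
      intro n
      rw [hsval n x]
      have hp := hnpos n
      rw [← mul_le_mul_iff_right₀ hp, ← mul_assoc, mul_inv_cancel₀ hp.ne', one_mul]
      exact Nat.floor_le (by positivity)
    have hlim : Tendsto (fun n : ℕ => f x - ((n : ℝ) + 1)⁻¹) atTop (nhds (f x)) := by
      have h2 : Tendsto (fun n : ℕ => ((n : ℝ) + 1)⁻¹) atTop (nhds 0) := by
        simpa [one_div] using tendsto_one_div_add_atTop_nhds_zero_nat (𝕜 := ℝ)
      simpa using tendsto_const_nhds.sub h2
    exact tendsto_of_tendsto_of_tendsto_of_le_of_le hlim tendsto_const_nhds hlow hup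
  exact pc_limClosed F s hsG f hstend

end Main

/-- On a Polish space, the pointwise closure of the continuous `[0,1]`-valued functions
is the set of Borel measurable `[0,1]`-valued functions; the same holds for compactly
supported continuous functions if the space is locally compact. -/
theorem stmt11 {E : Type*} [TopologicalSpace E] [PolishSpace E]
    [MeasurableSpace E] [BorelSpace E] :
    pointwiseClosure {f : E → ℝ | Continuous f ∧ ∀ x, f x ∈ Set.Icc (0 : ℝ) 1}
        = {f : E → ℝ | Measurable f ∧ ∀ x, f x ∈ Set.Icc (0 : ℝ) 1} ∧
      (LocallyCompactSpace E →
        pointwiseClosure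
            {f : E → ℝ | Continuous f ∧ HasCompactSupport f ∧ ∀ x, f x ∈ Set.Icc (0 : ℝ) 1}
          = {f : E → ℝ | Measurable f ∧ ∀ x, f x ∈ Set.Icc (0 : ℝ) 1}) := by
  classical
  have case1 := pc_cont_eq (E := E)
  refine ⟨case1, ?_⟩
  intro hlc
  haveI := hlc
  letI := TopologicalSpace.upgradeIsCompletelyMetrizable E
  haveI : SigmaCompactSpace E := inferInstance
  set F₂ : Set (E → ℝ) :=
    {f : E → ℝ | Continuous f ∧ HasCompactSupport f ∧ ∀ x, f x ∈ Set.Icc (0 : ℝ) 1} with hF₂def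
  apply Set.Subset.antisymm
  · apply pc_min _ limClosed_measIcc
    rintro f ⟨hfc, _, hf01⟩
    exact ⟨hfc.measurable, hf01⟩
  · rw [← case1]
    apply pc_min _ (pc_limClosed F₂)
    rintro f ⟨hfc, hf01⟩
    have hury : ∀ n : ℕ, ∃ g : C(E, ℝ), Set.EqOn g 1 (compactCovering E n) ∧
        Set.EqOn g 0 (∅ : Set E) ∧ HasCompactSupport g ∧ ∀ x, g x ∈ Set.Icc (0 : ℝ) 1 :=
      fun n => exists_continuous_one_zero_of_isCompact (isCompact_compactCovering E n)
        isClosed_empty (Set.disjoint_empty _)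
    choose g hg1 _ hgcs hg01 using hury
    set q : ℕ → E → ℝ := fun n x => f x * g n x with hqdef
    have hq : ∀ n, q n ∈ F₂ := by
      intro n
      refine ⟨hfc.mul (g n).continuous, ?_, ?_⟩
      · have : q n = f * ⇑(g n) := rfl
        rw [this]
        exact (hgcs n).mul_left
      · intro x
        exact ⟨mul_nonneg (hf01 x).1 (hg01 n x).1,
          mul_le_one₀ (hf01 x).2 (hg01 n x).1 (hg01 n x).2⟩
    apply pc_limClosed F₂ q (fun n => subset_pc F₂ (hq n))
    intro x
    obtain ⟨N, hN⟩ := exists_mem_compactCovering x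
    apply tendsto_atTop_of_eventually_const (i₀ := N)
    intro n hn
    have hx : x ∈ compactCovering E n := compactCovering_subset E hn hN
    have hgx : g n x = 1 := hg1 n hx
    simp [hqdef, hgx]
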